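/- Let 1/2 < η < 1 and let Ṽ_η be the normalised Wolbachia operator. For every initial point s = (x₁⁽⁰⁾,x₂⁽⁰⁾,x₃⁽⁰⁾,u⁽⁰⁾) ∈ S^{3,1}, the sequence Ṽ_η^k(s) converges as k → ∞, with limit (0, 1/2, 0, 1/2) if x₁⁽⁰⁾ = x₃⁽⁰⁾ = 0, and limit (η, 0, 0, 1−η) otherwise. -/

import Mathlib

/-- The normalised Wolbachia gonosomal operator with parameter `η`
(defined for points whose first three coordinates have positive sum). -/
noncomputable def nWolbOp (η : ℝ) (p : ℝ × ℝ × ℝ × ℝ) : ℝ × ℝ × ℝ × ℝ :=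
  (η * (2 * p.1 + p.2.2.1) / (2 * (p.1 + p.2.1 + p.2.2.1)),
   (p.2.1 + (1 - η) * p.2.2.1) / (2 * (p.1 + p.2.1 + p.2.2.1)),
   η * p.2.2.1 / (2 * (p.1 + p.2.1 + p.2.2.1)),
   ((1 - η) * (2 * p.1 + p.2.2.1) + p.2.1) / (2 * (p.1 + p.2.1 + p.2.2.1)))

/-- The set `S^{3,1}` of frequency distributions. -/
def S31 : Set (ℝ × ℝ × ℝ × ℝ) :=
  {p | 0 ≤ p.1 ∧ 0 ≤ p.2.1 ∧ 0 ≤ p.2.2.1 ∧ 0 ≤ p.2.2.2 ∧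
       0 < p.1 + p.2.1 + p.2.2.1 ∧ 0 < p.2.2.2 ∧
       p.1 + p.2.1 + p.2.2.1 + p.2.2.2 = 1}

/-- `S31` is invariant under the normalised Wolbachia operator. -/
lemma wolb_mem {η : ℝ} (h1 : 1 / 2 < η) (h2 : η < 1) {p : ℝ × ℝ × ℝ × ℝ}
    (hp : p ∈ S31) : nWolbOp η p ∈ S31 := by
  obtain ⟨a, b, c, d⟩ := p
  obtain ⟨ha, hb, hc, hd, hα, hu, hsum⟩ := hp
  simp only [S31, Set.mem_setOf_eq, nWolbOp] at *
  have hα' : (0:ℝ) < 2 * (a + b + c) := by linarith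
  refine ⟨div_nonneg (by nlinarith) hα'.le, div_nonneg (by nlinarith) hα'.le,
    div_nonneg (by nlinarith) hα'.le, div_nonneg (by nlinarith) hα'.le, ?_, ?_, ?_⟩
  · rw [← add_div, ← add_div]
    exact div_pos (by nlinarith) hα'
  · exact div_pos (by nlinarith) hα'
  · field_simp
    ring

/-- Evolution of `x₁ + x₃` under one step. -/
lemma wolb_A {η : ℝ} (p : ℝ × ℝ × ℝ × ℝ) (hα : 0 < p.1 + p.2.1 + p.2.2.1) :
    (nWolbOp η p).1 + (nWolbOp η p).2.2.1
      = η * (p.1 + p.2.2.1) / (p.1 + p.2.1 + p.2.2.1) := by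
  obtain ⟨a, b, c, d⟩ := p
  simp only [nWolbOp] at *
  field_simp
  ring

/-- Evolution of `x₂ + x₃` under one step. -/
lemma wolb_B {η : ℝ} (p : ℝ × ℝ × ℝ × ℝ) (hα : 0 < p.1 + p.2.1 + p.2.2.1) :
    (nWolbOp η p).2.1 + (nWolbOp η p).2.2.1
      = (p.2.1 + p.2.2.1) / (2 * (p.1 + p.2.1 + p.2.2.1)) := by
  obtain ⟨a, b, c, d⟩ := p
  simp only [nWolbOp] at *
  field_simp
  ring

theorem nWolbOp_limit (η : ℝ) (h1 : 1 / 2 < η) (h2 : η < 1)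
    (s : ℝ × ℝ × ℝ × ℝ) (hs : s ∈ S31) :
    (s.1 = 0 ∧ s.2.2.1 = 0 →
      Filter.Tendsto (fun k => (nWolbOp η)^[k] s) Filter.atTop
        (nhds ((0 : ℝ), (1 : ℝ) / 2, (0 : ℝ), (1 : ℝ) / 2))) ∧
    (¬(s.1 = 0 ∧ s.2.2.1 = 0) →
      Filter.Tendsto (fun k => (nWolbOp η)^[k] s) Filter.atTop
        (nhds (η, (0 : ℝ), (0 : ℝ), 1 - η))) := by
  constructor
  · -- the degenerate case `x₁ = x₃ = 0`: after one step we are at the fixed point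
    rintro ⟨hx1, hx3⟩
    obtain ⟨ha, hb, hc, hd, hα, hu, hsum⟩ := hs
    have hbpos : 0 < s.2.1 := by rw [hx1, hx3] at hα; linarith
    have hfix : nWolbOp η s = ((0:ℝ), 1/2, 0, 1/2) := by
      simp only [nWolbOp, hx1, hx3, Prod.mk.injEq]
      norm_num
      rw [div_eq_iff (by linarith)]; ring
    have hfix2 : nWolbOp η ((0:ℝ), 1/2, 0, 1/2) = ((0:ℝ), 1/2, 0, 1/2) := by
      simp only [nWolbOp, Prod.mk.injEq]
      norm_num
    have key : ∀ k : ℕ, (nWolbOp η)^[k + 1] s = ((0:ℝ), 1/2, 0, 1/2) := by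
      intro k
      rw [Function.iterate_succ_apply, hfix, Function.iterate_fixed hfix2]
    rw [← Filter.tendsto_add_atTop_iff_nat 1]
    simp only [key]
    exact tendsto_const_nhds
  · -- the main case `x₁ + x₃ > 0`
    intro hx
    have hη0 : (0:ℝ) < η := by linarith
    have hA0 : 0 < s.1 + s.2.2.1 := by
      obtain ⟨ha, hb, hc, hd, _, _, _⟩ := hs
      by_contra h
      push_neg at h
      exact hx ⟨le_antisymm (by linarith) ha, le_antisymm (by linarith) hc⟩
    set p : ℕ → ℝ × ℝ × ℝ × ℝ := fun k => (nWolbOp η)^[k] s with hp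
    -- the fundamental invariant:  membership, positivity of x₁+x₃, and the
    -- exact evolution law  (x₂+x₃)/(x₁+x₃) = w₀ / (2η)^k
    have key : ∀ k : ℕ, p k ∈ S31 ∧ 0 < (p k).1 + (p k).2.2.1 ∧
        ((p k).2.1 + (p k).2.2.1) * ((s.1 + s.2.2.1) * (2 * η) ^ k)
          = (s.2.1 + s.2.2.1) * ((p k).1 + (p k).2.2.1) := by
      intro k
      induction k with
      | zero => exact ⟨hs, hA0, by simp [hp]⟩
      | succ k ih =>
        obtain ⟨hmem, hApos, hid⟩ := ih
        obtain ⟨ha, hb, hc, hd, hα, hu, hsum⟩ := hmem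
        have hps : p (k + 1) = nWolbOp η (p k) := Function.iterate_succ_apply' _ _ _
        refine ⟨hps ▸ wolb_mem h1 h2 ⟨ha, hb, hc, hd, hα, hu, hsum⟩, ?_, ?_⟩
        · rw [hps, wolb_A _ hα]
          positivity
        · rw [hps, wolb_A _ hα, wolb_B _ hα, pow_succ, div_mul_eq_mul_div,
            ← mul_div_assoc, div_eq_div_iff (by positivity) (by positivity)]
          linear_combination (2 * η * ((p k).1 + (p k).2.1 + (p k).2.2.1)) * hid
    set r : ℝ := (2 * η)⁻¹ with hrdef
    have hr0 : 0 < r := by positivity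
    have hr1 : r < 1 := by
      rw [hrdef, inv_lt_one_iff₀]; right; linarith
    set C : ℝ := (s.2.1 + s.2.2.1) / (s.1 + s.2.2.1) with hCdef
    have hC0 : 0 ≤ C := by
      obtain ⟨_, hb, hc, _, _, _, _⟩ := hs
      exact div_nonneg (by linarith) hA0.le
    have hAle : ∀ k, (p k).1 + (p k).2.2.1 ≤ 1 := by
      intro k
      obtain ⟨_, hb, _, hd, _, hu, hsum⟩ := (key k).1
      linarith
    have hBval : ∀ k, (p k).2.1 + (p k).2.2.1
        = C * ((p k).1 + (p k).2.2.1) * r ^ k := by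
      intro k
      obtain ⟨_, hApos, hid⟩ := key k
      have hne : (s.1 + s.2.2.1) * (2 * η) ^ k ≠ 0 := by positivity
      have h' : (p k).2.1 + (p k).2.2.1
          = (s.2.1 + s.2.2.1) * ((p k).1 + (p k).2.2.1) / ((s.1 + s.2.2.1) * (2 * η) ^ k) := by
        rw [eq_div_iff hne]; linear_combination hid
      rw [h', hCdef, hrdef, inv_pow, div_eq_mul_inv, div_eq_mul_inv, mul_inv]
      ring
    have hBle : ∀ k, (p k).2.1 + (p k).2.2.1 ≤ C * r ^ k := by
      intro k
      calc (p k).2.1 + (p k).2.2.1 = C * ((p k).1 + (p k).2.2.1) * r ^ k := hBval k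
      _ ≤ C * 1 * r ^ k := by
          nlinarith [mul_nonneg (mul_nonneg hC0 (pow_nonneg hr0.le k))
            (sub_nonneg.2 (hAle k))]
      _ = C * r ^ k := by ring
    have hCr : Filter.Tendsto (fun k : ℕ => C * r ^ k) Filter.atTop (nhds 0) := by
      have := tendsto_pow_atTop_nhds_zero_of_lt_one hr0.le hr1
      simpa using this.const_mul C
    -- x₂ and x₃ tend to 0
    have hx2 : Filter.Tendsto (fun k => (p k).2.1) Filter.atTop (nhds 0) := by
      refine tendsto_of_tendsto_of_tendsto_of_le_of_le tendsto_const_nhds hCr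
        (fun k => ((key k).1).2.1) (fun k => ?_)
      have := hBle k
      have hc := ((key k).1).2.2.1
      linarith
    have hx3 : Filter.Tendsto (fun k => (p k).2.2.1) Filter.atTop (nhds 0) := by
      refine tendsto_of_tendsto_of_tendsto_of_le_of_le tendsto_const_nhds hCr
        (fun k => ((key k).1).2.2.1) (fun k => ?_)
      have := hBle k
      have hb := ((key k).1).2.1
      linarith
    -- x₁ + x₃ tends to η
    have hAsucc : ∀ k, η - η * C * r ^ k ≤ (p (k + 1)).1 + (p (k + 1)).2.2.1 ∧
        (p (k + 1)).1 + (p (k + 1)).2.2.1 ≤ η := by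
      intro k
      obtain ⟨hmem, hApos, _⟩ := key k
      obtain ⟨ha, hb, hc, hd, hα, hu, hsum⟩ := hmem
      have hps : p (k + 1) = nWolbOp η (p k) := Function.iterate_succ_apply' _ _ _
      rw [hps, wolb_A _ hα]
      constructor
      · rw [le_div_iff₀ hα]
        have h2k : (p k).2.1 ≤ C * ((p k).1 + (p k).2.2.1) * r ^ k := by
          have := hBval k; linarith
        nlinarith [mul_le_mul_of_nonneg_left h2k hη0.le,
          mul_nonneg (mul_nonneg (mul_nonneg hη0.le hC0) (pow_nonneg hr0.le k)) hb]
      · rw [div_le_iff₀ hα]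
        nlinarith
    have hAlim : Filter.Tendsto (fun k => (p k).1 + (p k).2.2.1) Filter.atTop (nhds η) := by
      rw [← Filter.tendsto_add_atTop_iff_nat 1]
      refine tendsto_of_tendsto_of_tendsto_of_le_of_le (g := fun k : ℕ => η - η * C * r ^ k)
        ?_ tendsto_const_nhds (fun k => (hAsucc k).1) (fun k => (hAsucc k).2)
      have := tendsto_pow_atTop_nhds_zero_of_lt_one hr0.le hr1
      have := this.const_mul (η * C)
      simpa using tendsto_const_nhds.sub this
    -- the four coordinate limits
    have hx1 : Filter.Tendsto (fun k => (p k).1) Filter.atTop (nhds η) := by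
      have := hAlim.sub hx3
      simpa using this
    have hx4 : Filter.Tendsto (fun k => (p k).2.2.2) Filter.atTop (nhds (1 - η)) := by
      have h := ((tendsto_const_nhds (x := (1:ℝ)) (f := Filter.atTop (α := ℕ))).sub
        ((hx1.add hx2).add hx3))
      have heq : (fun k => 1 - (((p k).1 + (p k).2.1) + (p k).2.2.1))
          = fun k => (p k).2.2.2 := by
        funext k
        have := ((key k).1).2.2.2.2.2.2
        linarith
      rw [heq] at h
      simpa using h
    exact hx1.prodMk_nhds (hx2.prodMk_nhds (hx3.prodMk_nhds hx4))
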